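/- Let $H \in [0,1)$ and $\rho > 0$, and define $x_\rho(t) = \dfrac{H\cosh(2\rho+2t) + \sinh(2\rho) - H\cosh(2\rho)}{\sinh(2\rho+2t)}$ for $t > 0$. Then for every $r > 0$ the function $t \mapsto \dfrac{x_\rho(t)}{\cosh(t)\sqrt{1-x_\rho(t)^2}}$ is integrable on the interval $(0,r)$, even though it is unbounded near $t = 0$. -/

import Mathlib

open Real MeasureTheory

lemma stmt5_key (H ρ t : ℝ) :
    Real.sinh (2*ρ+2*t) - (H * Real.cosh (2*ρ+2*t) + Real.sinh (2*ρ) - H * Real.cosh (2*ρ))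
      = 2 * Real.sinh t * (Real.cosh (2*ρ+t) - H * Real.sinh (2*ρ+t)) := by
  have e1 : Real.exp (2*ρ+2*t) = Real.exp ρ ^ 2 * Real.exp t ^ 2 := by
    rw [show (2*ρ+2*t) = ρ + ρ + (t + t) by ring, Real.exp_add, Real.exp_add, Real.exp_add]; ring
  have e2 : Real.exp (2*ρ+t) = Real.exp ρ ^ 2 * Real.exp t := by
    rw [show (2*ρ+t) = ρ + ρ + t by ring, Real.exp_add, Real.exp_add]; ring
  have e3 : Real.exp (2*ρ) = Real.exp ρ ^ 2 := by
    rw [show (2*ρ) = ρ + ρ by ring, Real.exp_add]; ring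
  have ht := Real.exp_ne_zero t
  have h1 := Real.exp_ne_zero ρ
  simp only [Real.sinh_eq, Real.cosh_eq, Real.exp_neg, e1, e2, e3]
  field_simp
  ring

/-- For `H ∈ [0,1)` and `ρ > 0`, with
`x_ρ(t) = (H cosh(2ρ+2t) + sinh(2ρ) - H cosh(2ρ)) / sinh(2ρ+2t)`,
the function `t ↦ x_ρ(t)/(cosh(t)√(1-x_ρ(t)²))` is integrable on `(0,r)` for every
`r > 0`, even though it is unbounded near `t = 0`. -/
theorem stmt_5 (H ρ : ℝ) (hH : H ∈ Set.Ico (0 : ℝ) 1) (hρ : 0 < ρ)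
    (x : ℝ → ℝ)
    (hx : ∀ t, x t = (H * Real.cosh (2 * ρ + 2 * t) + Real.sinh (2 * ρ) -
      H * Real.cosh (2 * ρ)) / Real.sinh (2 * ρ + 2 * t)) :
    (∀ r > 0, IntegrableOn
      (fun t => x t / (Real.cosh t * Real.sqrt (1 - x t ^ 2))) (Set.Ioo 0 r)) ∧
    (∀ ε > 0, ¬ BddAbove
      ((fun t => x t / (Real.cosh t * Real.sqrt (1 - x t ^ 2))) '' Set.Ioo 0 ε)) := by
  obtain ⟨hH0, hH1⟩ := hH
  have hxf : x = fun t => (H * Real.cosh (2 * ρ + 2 * t) + Real.sinh (2 * ρ) -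
      H * Real.cosh (2 * ρ)) / Real.sinh (2 * ρ + 2 * t) := funext hx
  subst hxf
  set xf : ℝ → ℝ := fun t => (H * Real.cosh (2 * ρ + 2 * t) + Real.sinh (2 * ρ) -
      H * Real.cosh (2 * ρ)) / Real.sinh (2 * ρ + 2 * t) with hxf
  -- basic positivity facts
  have hs2ρ : 0 < Real.sinh (2 * ρ) := Real.sinh_pos_iff.mpr (by linarith)
  have hS : ∀ t : ℝ, 0 ≤ t → 0 < Real.sinh (2 * ρ + 2 * t) :=
    fun t ht => Real.sinh_pos_iff.mpr (by linarith)
  -- numerator positivity: x t > 0 for t ≥ 0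
  have hnum : ∀ t : ℝ, 0 ≤ t →
      Real.sinh (2 * ρ) ≤ H * Real.cosh (2 * ρ + 2 * t) + Real.sinh (2 * ρ) -
        H * Real.cosh (2 * ρ) := by
    intro t ht
    have hc : Real.cosh (2 * ρ) ≤ Real.cosh (2 * ρ + 2 * t) := by
      rw [Real.cosh_le_cosh]
      rw [abs_of_nonneg (by linarith), abs_of_nonneg (by linarith)]
      linarith
    nlinarith
  have hxpos : ∀ t : ℝ, 0 ≤ t → 0 < xf t := by
    intro t ht
    exact div_pos (lt_of_lt_of_le hs2ρ (hnum t ht)) (hS t ht)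
  -- x t < 1 for t > 0, with quantitative bound
  have hgap : ∀ t : ℝ, 0 < t →
      (2 * Real.sinh t * (Real.cosh (2*ρ+t) - H * Real.sinh (2*ρ+t))) /
        Real.sinh (2 * ρ + 2 * t) = 1 - xf t := by
    intro t ht
    rw [← stmt5_key H ρ t]
    rw [hx t]
    field_simp [hxf, (hS t ht.le).ne']
  have hfac : ∀ t : ℝ, 0 < t →
      Real.exp (-(2*ρ+t)) ≤ Real.cosh (2*ρ+t) - H * Real.sinh (2*ρ+t) := by
    intro t ht
    have h1 : Real.cosh (2*ρ+t) - Real.sinh (2*ρ+t) = Real.exp (-(2*ρ+t)) :=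
      Real.cosh_sub_sinh _
    have h2 : 0 < Real.sinh (2*ρ+t) := Real.sinh_pos_iff.mpr (by linarith)
    nlinarith
  have hxlt1 : ∀ t : ℝ, 0 < t → xf t < 1 := by
    intro t ht
    have hst : 0 < Real.sinh t := Real.sinh_pos_iff.mpr ht
    have := hgap t ht
    have hpos : 0 < (2 * Real.sinh t * (Real.cosh (2*ρ+t) - H * Real.sinh (2*ρ+t))) /
        Real.sinh (2 * ρ + 2 * t) := by
      apply div_pos _ (hS t ht.le)
      have := hfac t ht
      nlinarith [Real.exp_pos (-(2*ρ+t))]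
    linarith
  have hone_sub_sq : ∀ t : ℝ, 0 < t → 0 < 1 - xf t ^ 2 := by
    intro t ht
    have h1 := hxpos t ht.le
    have h2 := hxlt1 t ht
    nlinarith
  constructor
  · -- integrability
    intro r hr
    set c : ℝ := 2 * Real.exp (-(2*ρ+r)) / Real.sinh (2*ρ+2*r) with hc
    have hcpos : 0 < c :=
      div_pos (by positivity) (Real.sinh_pos_iff.mpr (by linarith))
    -- quantitative lower bound on 1 - xf t on (0, r)
    have hlow : ∀ t ∈ Set.Ioo (0:ℝ) r, c * t ≤ 1 - xf t ^ 2 := by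
      intro t ht
      obtain ⟨ht0, htr⟩ := ht
      have hst : t ≤ Real.sinh t := (Real.self_lt_sinh_iff.mpr ht0).le
      have hE : Real.exp (-(2*ρ+r)) ≤ Real.exp (-(2*ρ+t)) :=
        Real.exp_le_exp.mpr (by linarith)
      have hF := hfac t ht0
      have hSr : Real.sinh (2*ρ+2*t) ≤ Real.sinh (2*ρ+2*r) :=
        Real.sinh_le_sinh.mpr (by linarith)
      have hSt := hS t ht0.le
      have hSrp : 0 < Real.sinh (2*ρ+2*r) := Real.sinh_pos_iff.mpr (by linarith)
      have hnumge : 2 * Real.exp (-(2*ρ+r)) * t ≤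
          2 * Real.sinh t * (Real.cosh (2*ρ+t) - H * Real.sinh (2*ρ+t)) := by
        nlinarith [Real.exp_pos (-(2*ρ+r)), Real.exp_pos (-(2*ρ+t))]
      have hdiv : c * t ≤ (2 * Real.sinh t * (Real.cosh (2*ρ+t) - H * Real.sinh (2*ρ+t))) /
          Real.sinh (2 * ρ + 2 * t) := by
        rw [hc]
        rw [div_mul_eq_mul_div, div_le_div_iff₀ hSrp hSt]
        have hnn : 0 ≤ 2 * Real.sinh t * (Real.cosh (2*ρ+t) - H * Real.sinh (2*ρ+t)) := by
          nlinarith [Real.exp_pos (-(2*ρ+t)), Real.sinh_pos_iff.mpr ht0]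
        calc 2 * Real.exp (-(2*ρ+r)) * t * Real.sinh (2*ρ+2*t)
            ≤ (2 * Real.sinh t * (Real.cosh (2*ρ+t) - H * Real.sinh (2*ρ+t))) *
              Real.sinh (2*ρ+2*r) := by nlinarith
          _ = _ := by ring
      rw [hgap t ht0] at hdiv
      have h1 := hxpos t ht0.le
      have h2 := hxlt1 t ht0
      nlinarith
    -- continuity on Ioo 0 r
    have hXc : ContinuousOn xf (Set.Ioo 0 r) := by
      apply ContinuousOn.div (by fun_prop) (by fun_prop)
      exact fun t ht => (hS t ht.1.le).ne'
    have hcont : ContinuousOn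
        (fun t => xf t / (Real.cosh t * Real.sqrt (1 - xf t ^ 2))) (Set.Ioo 0 r) := by
      apply ContinuousOn.div hXc
      · exact Real.continuous_cosh.continuousOn.mul
          ((continuousOn_const.sub (hXc.pow 2)).sqrt)
      · intro t ht
        have h1 : (0:ℝ) < Real.cosh t := Real.cosh_pos t
        have h2 : 0 < Real.sqrt (1 - xf t ^ 2) := Real.sqrt_pos.mpr (hone_sub_sq t ht.1)
        positivity
    -- dominating function
    have hg : IntegrableOn (fun t : ℝ => (Real.sqrt c)⁻¹ * t ^ (-(1/2) : ℝ))
        (Set.Ioo 0 r) := by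
      have h1 : IntervalIntegrable (fun t : ℝ => t ^ (-(1/2) : ℝ)) volume 0 r :=
        intervalIntegral.intervalIntegrable_rpow' (by norm_num)
      exact ((intervalIntegrable_iff_integrableOn_Ioo_of_le hr.le).mp h1).const_mul _
    apply Integrable.mono' hg (hcont.aestronglyMeasurable measurableSet_Ioo)
    rw [ae_restrict_iff' measurableSet_Ioo]
    refine ae_of_all _ fun t ht => ?_
    obtain ⟨ht0, htr⟩ := ht
    have h1 := hxpos t ht0.le
    have h2 := hxlt1 t ht0
    have h3 := hlow t ⟨ht0, htr⟩
    have hct : 0 < c * t := by positivity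
    have hsq : Real.sqrt (c * t) ≤ Real.sqrt (1 - xf t ^ 2) := Real.sqrt_le_sqrt h3
    have hsqpos : 0 < Real.sqrt (c * t) := Real.sqrt_pos.mpr hct
    have hcosh : (1:ℝ) ≤ Real.cosh t := Real.one_le_cosh t
    have hDge : Real.sqrt (c * t) ≤ Real.cosh t * Real.sqrt (1 - xf t ^ 2) := by
      nlinarith [Real.sqrt_nonneg (1 - xf t ^ 2)]
    have hfnn : 0 ≤ xf t / (Real.cosh t * Real.sqrt (1 - xf t ^ 2)) := by
      apply div_nonneg h1.le
      positivity
    rw [Real.norm_eq_abs, abs_of_nonneg hfnn]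
    have hb : xf t / (Real.cosh t * Real.sqrt (1 - xf t ^ 2)) ≤ 1 / Real.sqrt (c * t) :=
      div_le_div₀ (by norm_num) h2.le hsqpos hDge
    have heq : (Real.sqrt c)⁻¹ * t ^ (-(1/2) : ℝ) = 1 / Real.sqrt (c * t) := by
      rw [Real.rpow_neg ht0.le, Real.sqrt_mul hcpos.le, ← Real.sqrt_eq_rpow]
      rw [one_div, mul_inv]
    rw [heq]
    exact hb
  · -- unboundedness
    intro ε hε hbdd
    obtain ⟨M, hM⟩ := hbdd
    -- xf is continuous at 0 with value 1
    have hx0 : xf 0 = 1 := by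
      have : Real.sinh (2 * ρ + 2 * 0) = Real.sinh (2 * ρ) := by norm_num
      simp only [hxf]
      rw [this]
      field_simp
      simp
    have hXc0 : ContinuousAt xf 0 := by
      apply ContinuousAt.div (by fun_prop) (by fun_prop)
      have : (0:ℝ) < Real.sinh (2 * ρ + 2 * 0) := hS 0 le_rfl
      exact this.ne'
    set D : ℝ → ℝ := fun t => Real.cosh t * Real.sqrt (1 - xf t ^ 2) with hD
    have hDc0 : ContinuousAt D 0 := by
      apply ContinuousAt.mul Real.continuous_cosh.continuousAt
      exact (Real.continuous_sqrt.continuousAt).comp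
        ((continuousAt_const.sub (hXc0.pow 2)))
    have hD0 : D 0 = 0 := by
      simp only [hD, hx0]
      norm_num
    have hDt : Filter.Tendsto D (nhdsWithin 0 (Set.Ioi 0)) (nhdsWithin 0 (Set.Ioi 0)) := by
      apply tendsto_nhdsWithin_of_tendsto_nhds_of_eventually_within
      · have h := hDc0.tendsto.mono_left
          (nhdsWithin_le_nhds : nhdsWithin (0:ℝ) (Set.Ioi 0) ≤ nhds 0)
        rwa [hD0] at h
      · filter_upwards [self_mem_nhdsWithin] with t ht
        have h1 : 0 < 1 - xf t ^ 2 := hone_sub_sq t ht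
        have h2 : 0 < Real.sqrt (1 - xf t ^ 2) := Real.sqrt_pos.mpr h1
        have h3 : (0:ℝ) < Real.cosh t := Real.cosh_pos t
        show D t ∈ Set.Ioi 0
        simp only [hD, Set.mem_Ioi]
        positivity
    have hDinv : Filter.Tendsto (fun t => (D t)⁻¹) (nhdsWithin 0 (Set.Ioi 0))
        Filter.atTop := hDt.inv_tendsto_nhdsGT_zero
    have hnumt : Filter.Tendsto xf (nhdsWithin 0 (Set.Ioi 0)) (nhds 1) := by
      have h := hXc0.tendsto.mono_left
        (nhdsWithin_le_nhds : nhdsWithin (0:ℝ) (Set.Ioi 0) ≤ nhds 0)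
      rwa [hx0] at h
    have hphi : Filter.Tendsto (fun t => xf t / D t) (nhdsWithin 0 (Set.Ioi 0))
        Filter.atTop := by
      simp only [div_eq_mul_inv]
      exact hnumt.pos_mul_atTop one_pos hDinv
    have hev : ∀ᶠ t in nhdsWithin 0 (Set.Ioi 0), M < xf t / D t :=
      hphi.eventually_gt_atTop M
    have hmem : Set.Ioo (0:ℝ) ε ∈ nhdsWithin 0 (Set.Ioi 0) :=
      Ioo_mem_nhdsGT_of_mem ⟨le_rfl, hε⟩
    obtain ⟨t, htM, htε⟩ := (hev.and (Filter.eventually_of_mem hmem fun t ht => ht)).exists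
    exact absurd (hM ⟨t, htε, rfl⟩) (not_le.mpr htM)
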